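/- arXiv:2104.00731 — 3 statements merged into one kernel-verified Lean document; each statement's English description precedes it below -/
import Mathlib

section
/- Let $E=[0,\infty)$, $c>0$, $\alpha\in(1-e^{-c-1},1]$ with $(1-\alpha)e^c<1$, and $K=\ln\big(\frac{\alpha e^c}{1-(1-\alpha)e^c}\big)$. Then the function $v(x)=x\wedge K$ satisfies the Bellman equation $e^{v(x)}=e^x\wedge e^c(\alpha e^{v(0)}+(1-\alpha)e^{v(x+1)})$ for all $x\in E$. -/
/-- for `c > 0`, `α ∈ (1 - e^{-c-1}, 1]` with `(1-α)e^c < 1`, and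
`K = ln(α e^c / (1 - (1-α)e^c))`, the function `v(x) = x ⊓ K` satisfies the Bellman
equation `e^{v x} = e^x ⊓ e^c (α e^{v 0} + (1-α) e^{v(x+1)})` on `E = [0, ∞)`. -/
theorem stmt11 (c α : ℝ) (hc : 0 < c)
    (hα : α ∈ Set.Ioc (1 - Real.exp (-c - 1)) 1)
    (hconv : (1 - α) * Real.exp c < 1) :
    ∀ x : ℝ, 0 ≤ x →
      Real.exp (min x (Real.log (α * Real.exp c / (1 - (1 - α) * Real.exp c))))
        = min (Real.exp x)
          (Real.exp c *
            (α * Real.exp (min 0 (Real.log (α * Real.exp c / (1 - (1 - α) * Real.exp c))))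
              + (1 - α) *
                Real.exp (min (x + 1)
                  (Real.log (α * Real.exp c / (1 - (1 - α) * Real.exp c)))))) := by
  obtain ⟨hα1, hα2⟩ := hα
  set K := Real.log (α * Real.exp c / (1 - (1 - α) * Real.exp c)) with hKdef
  have hD : 0 < 1 - (1 - α) * Real.exp c := by linarith
  have hec : 1 < Real.exp c := by
    have := Real.add_one_le_exp c; linarith
  have hαpos : 0 < α := by
    have h1 : Real.exp (-c - 1) < 1 := by
      have := Real.exp_lt_one_iff.mpr (show -c - 1 < 0 by linarith)
      exact this
    linarith
  have hRpos : 0 < α * Real.exp c / (1 - (1 - α) * Real.exp c) := by positivity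
  have heK : Real.exp K = α * Real.exp c / (1 - (1 - α) * Real.exp c) :=
    Real.exp_log hRpos
  have hK0 : 0 ≤ K := Real.log_nonneg (by
    rw [le_div_iff₀ hD]; nlinarith)
  have hkey : Real.exp c * (α * Real.exp (min 0 K) + (1 - α) * Real.exp K)
      = Real.exp K := by
    rw [min_eq_left hK0, Real.exp_zero, heK]
    rw [eq_div_iff hD.ne']
    linear_combination ((1 - α) * Real.exp c) * (div_mul_cancel₀ (α * Real.exp c) hD.ne')
  intro x hx
  rcases le_or_gt (x + 1) K with h1 | h1
  · have hxK : x ≤ K := by linarith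
    rw [min_eq_left hxK, min_eq_left h1, min_eq_left hK0, Real.exp_zero]
    have hE1 : (1 : ℝ) ≤ Real.exp 1 := by
      have := Real.add_one_le_exp 1; linarith
    have hx1 : Real.exp x * Real.exp 1 * (1 - (1 - α) * Real.exp c)
        ≤ α * Real.exp c := by
      have h2 : Real.exp (x + 1) ≤ Real.exp K := Real.exp_le_exp.mpr h1
      rw [Real.exp_add, heK] at h2
      calc Real.exp x * Real.exp 1 * (1 - (1 - α) * Real.exp c)
          ≤ α * Real.exp c / (1 - (1 - α) * Real.exp c) * (1 - (1 - α) * Real.exp c) := by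
            exact mul_le_mul_of_nonneg_right h2 hD.le
        _ = α * Real.exp c := by rw [div_mul_cancel₀ _ hD.ne']
    have hle : Real.exp x ≤ Real.exp c * (α * 1 + (1 - α) * Real.exp (x + 1)) := by
      rw [Real.exp_add]
      have hexp : 0 < Real.exp x := Real.exp_pos x
      have hecpos : 0 < Real.exp c := Real.exp_pos c
      nlinarith [mul_pos hexp hecpos]
    exact (min_eq_left hle).symm
  · rcases le_or_gt K x with h2 | h2
    · rw [min_eq_right h2, min_eq_right (by linarith : K ≤ x + 1), hkey]
      exact (min_eq_right (Real.exp_le_exp.mpr h2)).symm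
    · rw [min_eq_left h2.le, min_eq_right h1.le, hkey]
      exact (min_eq_left (Real.exp_le_exp.mpr h2.le)).symm
end

section
/- Let $c>0$ and $\alpha\in(1-e^{-c},1-e^{-c-1}]$, so $(1-\alpha)e^c<1\le(1-\alpha)e^{c+1}$, and set $K=\ln\big(\frac{\alpha e^c}{1-(1-\alpha)e^c}\big)$. Then both $v_1(x)=x\wedge K$ and $v_2(x)=x$ solve the Bellman equation $e^{v(x)}=e^x\wedge e^c(\alpha e^{v(0)}+(1-\alpha)e^{v(x+1)})$ on $[0,\infty)$, and $v_1(x)<v_2(x)$ for $x>K$; in particular the Bellman equation has at least two distinct solutions in $\{v: 0\le v(x)\le x\}$. -/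
/-- for `c > 0` and `α ∈ (1 - e^{-c}, 1 - e^{-c-1}]` (so
`(1-α)e^c < 1 ≤ (1-α)e^{c+1}`), with `K = ln(α e^c / (1 - (1-α)e^c))`, both
`v₁(x) = x ⊓ K` and `v₂(x) = x` solve the Bellman equation
`e^{v x} = e^x ⊓ e^c (α e^{v 0} + (1-α) e^{v(x+1)})` on `[0, ∞)`, and `v₁ < v₂` for
`x > K`; in particular the equation has at least two distinct solutions in
`{v : 0 ≤ v(x) ≤ x}`. -/
theorem stmt13 (c α : ℝ) (hc : 0 < c)
    (hα : α ∈ Set.Ioc (1 - Real.exp (-c)) (1 - Real.exp (-c - 1))) :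
    (∀ x : ℝ, 0 ≤ x →
      Real.exp (min x (Real.log (α * Real.exp c / (1 - (1 - α) * Real.exp c))))
        = min (Real.exp x)
          (Real.exp c *
            (α * Real.exp (min 0 (Real.log (α * Real.exp c / (1 - (1 - α) * Real.exp c))))
              + (1 - α) *
                Real.exp (min (x + 1)
                  (Real.log (α * Real.exp c / (1 - (1 - α) * Real.exp c)))))))
    ∧ (∀ x : ℝ, 0 ≤ x →
      Real.exp x
        = min (Real.exp x)
          (Real.exp c * (α * Real.exp 0 + (1 - α) * Real.exp (x + 1))))
    ∧ (∀ x : ℝ, Real.log (α * Real.exp c / (1 - (1 - α) * Real.exp c)) < x →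
        min x (Real.log (α * Real.exp c / (1 - (1 - α) * Real.exp c))) < x) := by
  obtain ⟨hα1, hα2⟩ := hα
  have hec : (0:ℝ) < Real.exp c := Real.exp_pos c
  -- basic inequalities
  have hβ : (1 - α) * Real.exp c < 1 := by
    have h1 : 1 - α < Real.exp (-c) := by linarith
    have := mul_lt_mul_of_pos_right h1 hec
    rwa [← Real.exp_add, neg_add_cancel, Real.exp_zero] at this
  have hβ1 : (1:ℝ) ≤ (1 - α) * Real.exp (c + 1) := by
    have h1 : Real.exp (-c - 1) ≤ 1 - α := by linarith
    have := mul_le_mul_of_nonneg_right h1 (le_of_lt (Real.exp_pos (c + 1)))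
    rw [← Real.exp_add] at this
    have h2 : -c - 1 + (c + 1) = 0 := by ring
    rw [h2, Real.exp_zero] at this
    exact this
  have hαpos : 0 < α := by
    have : Real.exp (-c) < 1 := by
      rw [Real.exp_lt_one_iff]; linarith
    linarith
  have hden : 0 < 1 - (1 - α) * Real.exp c := by linarith
  set L : ℝ := α * Real.exp c / (1 - (1 - α) * Real.exp c) with hLdef
  have hLpos : 0 < L := div_pos (mul_pos hαpos hec) hden
  set K : ℝ := Real.log L with hKdef
  have heK : Real.exp K = L := Real.exp_log hLpos
  -- fixed point identity: e^c (α + (1-α) L) = L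
  have hfix : Real.exp c * (α + (1 - α) * L) = L := by
    rw [hLdef]
    have hI : (1 - (1 - α) * Real.exp c) * (1 - (1 - α) * Real.exp c)⁻¹ = 1 :=
      mul_inv_cancel₀ hden.ne'
    rw [div_eq_mul_inv]
    linear_combination (-(Real.exp c * α)) * hI
  have hK0 : 0 ≤ K := by
    rw [hKdef]
    apply Real.le_log_iff_exp_le hLpos |>.mpr
    rw [Real.exp_zero, hLdef, le_div_iff₀ hden]
    have : (1:ℝ) ≤ Real.exp c := by
      rw [show (1:ℝ) = Real.exp 0 from (Real.exp_zero).symm]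
      exact Real.exp_le_exp.mpr hc.le
    nlinarith
  have hmin0 : min 0 K = 0 := min_eq_left hK0
  refine ⟨?_, ?_, ?_⟩
  · intro x hx
    rw [hmin0, Real.exp_zero, mul_one]
    rcases le_total K x with hKx | hxK
    · -- x ≥ K
      have h1 : min x K = K := min_eq_right hKx
      have h2 : min (x + 1) K = K := min_eq_right (by linarith)
      rw [h1, h2, heK, hfix, min_eq_right]
      rw [← heK]; exact Real.exp_le_exp.mpr hKx
    · -- x ≤ K
      have h1 : min x K = x := min_eq_left hxK
      rw [h1]
      rcases le_total (x + 1) K with h2 | h2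
      · rw [min_eq_left h2, min_eq_left]
        have : Real.exp x ≤ (1 - α) * Real.exp (c + 1) * Real.exp x :=
          le_mul_of_one_le_left (Real.exp_pos x).le hβ1
        have hrw : (1 - α) * Real.exp (c + 1) * Real.exp x
            = Real.exp c * ((1 - α) * Real.exp (x + 1)) := by
          rw [Real.exp_add c 1, Real.exp_add x 1]; ring
        nlinarith [mul_pos hαpos hec]
      · rw [min_eq_right h2, heK, min_eq_left]
        rw [hfix, ← heK]
        exact Real.exp_le_exp.mpr hxK
  · intro x hx
    rw [min_eq_left]
    have : Real.exp x ≤ (1 - α) * Real.exp (c + 1) * Real.exp x :=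
      le_mul_of_one_le_left (Real.exp_pos x).le hβ1
    have hrw : (1 - α) * Real.exp (c + 1) * Real.exp x
        = Real.exp c * ((1 - α) * Real.exp (x + 1)) := by
      rw [Real.exp_add c 1, Real.exp_add x 1]; ring
    rw [Real.exp_zero]
    nlinarith [mul_pos hαpos hec]
  · intro x hKx
    exact min_lt_iff.mpr (Or.inr hKx)
end

section
/- In the regime $\alpha\in(1-e^{-c},1-e^{-c-1}]$ with $K=\ln\big(\frac{\alpha e^c}{1-(1-\alpha)e^c}\big)$, define $v(x)=x$ for $x\in[0,K]\cup\mathbb{N}$ and $v(x)=K$ otherwise. Then $v$ solves the Bellman equation $e^{v(x)}=e^x\wedge e^c(\alpha e^{v(0)}+(1-\alpha)e^{v(x+1)})$ on $[0,\infty)$, and $v$ differs from both $x\mapsto x$ and $x\mapsto x\wedge K$. -/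
open scoped Classical

/-- The interpolating function of Statement 14: `v(x) = x` on `[0,K] ∪ ℕ` and
`v(x) = K` otherwise. -/
noncomputable def interpSol (K x : ℝ) : ℝ :=
  if x ≤ K ∨ ∃ n : ℕ, x = n then x else K

/-- in the regime `α ∈ (1 - e^{-c}, 1 - e^{-c-1}]`, with
`K = ln(α e^c / (1 - (1-α)e^c))`, the function `v(x) = x` for `x ∈ [0,K] ∪ ℕ` and
`v(x) = K` otherwise solves the Bellman equation
`e^{v x} = e^x ⊓ e^c (α e^{v 0} + (1-α) e^{v(x+1)})` on `[0,∞)`, and `v` differs from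
both `x ↦ x` and `x ↦ x ⊓ K`. -/
theorem stmt14 (c α : ℝ) (hc : 0 < c)
    (hα : α ∈ Set.Ioc (1 - Real.exp (-c)) (1 - Real.exp (-c - 1)))
    (K : ℝ) (hK : K = Real.log (α * Real.exp c / (1 - (1 - α) * Real.exp c))) :
    (∀ x : ℝ, 0 ≤ x →
      Real.exp (interpSol K x)
        = min (Real.exp x)
          (Real.exp c *
            (α * Real.exp (interpSol K 0) + (1 - α) * Real.exp (interpSol K (x + 1)))))
    ∧ (∃ x : ℝ, 0 ≤ x ∧ interpSol K x ≠ x)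
    ∧ (∃ x : ℝ, 0 ≤ x ∧ interpSol K x ≠ min x K) := by
  obtain ⟨hα1, hα2⟩ := hα
  have hec : (1:ℝ) ≤ Real.exp c := Real.one_le_exp hc.le
  have hecpos : (0:ℝ) < Real.exp c := Real.exp_pos c
  have hemc : Real.exp (-c) < 1 := by
    rw [Real.exp_lt_one_iff]; linarith
  have hα0 : 0 < α := by linarith
  have hinv : Real.exp (-c) * Real.exp c = 1 := by
    rw [← Real.exp_add]; simp
  have hD : 0 < 1 - (1 - α) * Real.exp c := by
    have h1 : 0 < (Real.exp (-c) - (1 - α)) * Real.exp c :=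
      mul_pos (by linarith) hecpos
    nlinarith [hinv]
  have hinv1 : Real.exp (-c - 1) * Real.exp (c + 1) = 1 := by
    rw [← Real.exp_add]; ring_nf; simp
  have hreg : 1 ≤ (1 - α) * Real.exp (c + 1) := by
    have h1 : Real.exp (-c - 1) ≤ 1 - α := by linarith
    have h2 := mul_le_mul_of_nonneg_right h1 (Real.exp_pos (c + 1)).le
    linarith [hinv1 ▸ h2]
  have hratio : 0 < α * Real.exp c / (1 - (1 - α) * Real.exp c) :=
    div_pos (mul_pos hα0 hecpos) hD
  have hEK : Real.exp K = α * Real.exp c / (1 - (1 - α) * Real.exp c) := by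
    rw [hK, Real.exp_log hratio]
  have h2 : Real.exp K * (1 - (1 - α) * Real.exp c) = α * Real.exp c := by
    rw [hEK]; exact div_mul_cancel₀ _ hD.ne'
  have hfix : Real.exp K = Real.exp c * (α + (1 - α) * Real.exp K) := by
    linear_combination h2
  have hK0 : 0 ≤ K := by
    rw [hK]
    apply Real.log_nonneg
    rw [le_div_iff₀ hD]
    nlinarith
  have hmono : ∀ x : ℝ, Real.exp x ≤ Real.exp c * (α + (1 - α) * Real.exp (x + 1)) := by
    intro x
    have h1 : Real.exp (x + 1) = Real.exp x * Real.exp 1 := Real.exp_add x 1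
    have h2' : Real.exp (c + 1) = Real.exp c * Real.exp 1 := Real.exp_add c 1
    have h3 := mul_le_mul_of_nonneg_left hreg (Real.exp_pos x).le
    have h5 : Real.exp c * ((1 - α) * Real.exp (x + 1))
        = Real.exp x * ((1 - α) * Real.exp (c + 1)) := by rw [h1, h2']; ring
    nlinarith [mul_pos hα0 hecpos, h5]
  have hv0 : interpSol K 0 = 0 := by
    have h : (0:ℝ) ≤ K ∨ ∃ n : ℕ, (0:ℝ) = n := Or.inr ⟨0, by norm_num⟩
    simp only [interpSol, if_pos h]
  refine ⟨?_, ?_, ?_⟩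
  · intro x hx
    by_cases hS : x ≤ K ∨ ∃ n : ℕ, x = (n : ℝ)
    · have hvx : interpSol K x = x := by simp only [interpSol, if_pos hS]
      by_cases hS1 : x + 1 ≤ K ∨ ∃ n : ℕ, x + 1 = (n : ℝ)
      · have hv1 : interpSol K (x + 1) = x + 1 := by simp only [interpSol, if_pos hS1]
        rw [hvx, hv1, hv0, Real.exp_zero, mul_one, min_eq_left (hmono x)]
      · have hv1 : interpSol K (x + 1) = K := by simp only [interpSol, if_neg hS1]
        have hxK : x ≤ K := by
          rcases hS with h | ⟨n, rfl⟩
          · exact h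
          · exact absurd (Or.inr ⟨n + 1, by push_cast; ring⟩) hS1
        rw [hvx, hv1, hv0, Real.exp_zero, mul_one]
        rw [← hfix, min_eq_left (Real.exp_le_exp.mpr hxK)]
    · have hvx : interpSol K x = K := by simp only [interpSol, if_neg hS]
      have hxK : K < x := lt_of_not_ge fun h => hS (Or.inl h)
      have hS1 : ¬(x + 1 ≤ K ∨ ∃ n : ℕ, x + 1 = (n : ℝ)) := by
        rintro (h | ⟨n, hn⟩)
        · linarith
        · rcases n with _ | m
          · push_cast at hn; linarith
          · exact hS (Or.inr ⟨m, by push_cast at hn ⊢; linarith⟩)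
      have hv1 : interpSol K (x + 1) = K := by simp only [interpSol, if_neg hS1]
      rw [hvx, hv1, hv0, Real.exp_zero, mul_one, ← hfix,
        min_eq_right (Real.exp_le_exp.mpr hxK.le)]
  · refine ⟨(⌈K⌉₊ : ℝ) + 1/2, by positivity, ?_⟩
    have hceil := Nat.le_ceil K
    have hcond : ¬((⌈K⌉₊ : ℝ) + 1/2 ≤ K ∨ ∃ m : ℕ, (⌈K⌉₊ : ℝ) + 1/2 = (m : ℝ)) := by
      rintro (h | ⟨m, hm⟩)
      · linarith
      · rcases lt_or_ge m (⌈K⌉₊ + 1) with h' | h'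
        · have : (m : ℝ) ≤ (⌈K⌉₊ : ℝ) := by exact_mod_cast Nat.lt_succ_iff.mp h'
          linarith
        · have : (⌈K⌉₊ : ℝ) + 1 ≤ (m : ℝ) := by exact_mod_cast h'
          linarith
    have hvx : interpSol K ((⌈K⌉₊ : ℝ) + 1/2) = K := by simp only [interpSol, if_neg hcond]
    rw [hvx]
    exact ne_of_lt (by linarith)
  · refine ⟨(⌈K⌉₊ : ℝ) + 1, by positivity, ?_⟩
    have hceil := Nat.le_ceil K
    have hcond : ((⌈K⌉₊ : ℝ) + 1 ≤ K ∨ ∃ m : ℕ, (⌈K⌉₊ : ℝ) + 1 = (m : ℝ)) :=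
      Or.inr ⟨⌈K⌉₊ + 1, by push_cast; ring⟩
    have hvx : interpSol K ((⌈K⌉₊ : ℝ) + 1) = (⌈K⌉₊ : ℝ) + 1 := by
      simp only [interpSol, if_pos hcond]
    rw [hvx, min_eq_right (by linarith)]
    exact ne_of_gt (by linarith)
end
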